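/- An integer n > 3 is prime if and only if the sum, over all primes p with p ≤ √n, of (C(n, p) mod n) equals 0. -/

import Mathlib

lemma not_dvd_choose_minFac (n : ℕ) (hn : 3 < n) (hnp : ¬ n.Prime) :
    ¬ n ∣ n.choose n.minFac := by
  set p := n.minFac with hp
  have hn0 : n ≠ 0 := by omega
  have hn1 : n ≠ 1 := by omega
  have hpp : p.Prime := Nat.minFac_prime hn1
  have hpdvd : p ∣ n := Nat.minFac_dvd n
  have hsq : p ^ 2 ≤ n := Nat.minFac_sq_le_self (by omega) hnp
  have hp2 : 2 ≤ p := hpp.two_le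
  have hpn : p < n := lt_of_lt_of_le (by nlinarith) hsq
  set a := n.factorization p with ha
  have ha1 : 1 ≤ a := Nat.Prime.factorization_pos_of_dvd hpp hn0 hpdvd
  -- factorization of descFactorial
  have hdesc : (n.descFactorial p).factorization p = a := by
    rw [Nat.descFactorial_eq_prod_range,
      Nat.factorization_prod (fun i hi => by
        have : i < p := Finset.mem_range.mp hi
        omega)]
    rw [Finset.sum_apply', Finset.sum_eq_single 0]
    · simp [ha]
    · intro i hi hi0
      have hip : i < p := Finset.mem_range.mp hi
      apply Nat.factorization_eq_zero_of_not_dvd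
      intro hdvd
      have hpi : p ∣ i := by
        have := Nat.dvd_sub hpdvd hdvd
        rwa [Nat.sub_sub_self (by omega)] at this
      exact absurd (Nat.le_of_dvd (by omega) hpi) (by omega)
    · exact fun h => absurd (Finset.mem_range.mpr (by omega)) h
  have hchoose_ne : n.choose p ≠ 0 := (Nat.choose_pos hpn.le).ne'
  have hfact1 : (p.factorial).factorization p = 1 := by
    have : p.factorial = p * (p - 1).factorial := by
      conv_lhs => rw [show p = (p - 1) + 1 by omega]
      rw [Nat.factorial_succ]
      congr 1
      omega
    rw [this, Nat.factorization_mul (by omega) (Nat.factorial_ne_zero _)]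
    have h2 : ¬ p ∣ (p - 1).factorial := by
      rw [Nat.Prime.dvd_factorial hpp]
      omega
    simp [hpp.factorization_self, Nat.factorization_eq_zero_of_not_dvd h2]
  have hchoosefac : (n.choose p).factorization p = a - 1 := by
    have hmul : n.descFactorial p = p.factorial * n.choose p :=
      Nat.descFactorial_eq_factorial_mul_choose n p
    rw [hmul, Nat.factorization_mul (Nat.factorial_ne_zero _) hchoose_ne] at hdesc
    simp only [Finsupp.add_apply, hfact1] at hdesc
    omega
  intro hdvd
  have := (Nat.factorization_le_iff_dvd hn0 hchoose_ne).mpr hdvd p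
  omega

theorem prime_iff_sum_binom_primes_le_sqrt (n : ℕ) (hn : 3 < n) :
    n.Prime ↔
      ∑ p ∈ (Finset.range (n + 1)).filter (fun p => p.Prime ∧ p ^ 2 ≤ n),
        (n.choose p % n) = 0 := by
  constructor
  · intro hprime
    apply Finset.sum_eq_zero
    intro p hp
    simp only [Finset.mem_filter, Finset.mem_range] at hp
    obtain ⟨_, hpp, hsq⟩ := hp
    have hp2 : 2 ≤ p := hpp.two_le
    have hpn : p < n := lt_of_lt_of_le (by nlinarith) hsq
    exact Nat.eq_zero_of_dvd_of_lt ((Nat.dvd_mod_iff dvd_rfl).mpr (hprime.dvd_choose_self (by omega) hpn)) (Nat.mod_lt _ (by omega))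
  · intro hsum
    by_contra hnp
    set p := n.minFac with hp
    have hpp : p.Prime := Nat.minFac_prime (by omega)
    have hsq : p ^ 2 ≤ n := Nat.minFac_sq_le_self (by omega) hnp
    have hmem : p ∈ (Finset.range (n + 1)).filter (fun p => p.Prime ∧ p ^ 2 ≤ n) := by
      simp only [Finset.mem_filter, Finset.mem_range]
      refine ⟨by nlinarith [hpp.two_le], hpp, hsq⟩
    have hzero : n.choose p % n = 0 :=
      (Finset.sum_eq_zero_iff).mp hsum p hmem
    exact not_dvd_choose_minFac n hn hnp (Nat.dvd_of_mod_eq_zero hzero)
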